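/- Let ψ ∈ C²(ℝ³) with bounded first and second derivatives, v₁ ≠ v₂ ∈ ℝ³, η = (v₁-v₂)/|v₁-v₂|, θ ∈ [0,π], m = (v₁+v₂)/2, and for unit η⊥ ⊥ η set v_i' = m - (-1)^i (|v₁-v₂|/2)(sinθ·η⊥ + cosθ·η). Then, integrating η⊥ over the unit circle S¹_η perpendicular to η, |∫_{S¹_η} (ψ(v₁') + ψ(v₂') - ψ(v₁) - ψ(v₂)) dη⊥| ≤ C sin²(θ/2)(‖∇ψ‖_∞ |v₁-v₂| + ‖∇²ψ‖_∞ |v₁-v₂|²) for a universal constant C. -/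

import Mathlib

open Real MeasureTheory
open scoped RealInnerProductSpace
set_option maxHeartbeats 1000000

private lemma grad_norm_eq {ψ : EuclideanSpace ℝ (Fin 3) → ℝ} (v : EuclideanSpace ℝ (Fin 3)) :
    ‖fderiv ℝ ψ v‖ = ‖gradient ψ v‖ := by
  unfold gradient
  exact (LinearIsometryEquiv.norm_map _ _).symm

private lemma taylor2 {ψ : EuclideanSpace ℝ (Fin 3) → ℝ} (hψ : ContDiff ℝ 2 ψ) {G₂ : ℝ}
    (hG₂ : ∀ v, ‖fderiv ℝ (fun w => fderiv ℝ ψ w) v‖ ≤ G₂) (a b : EuclideanSpace ℝ (Fin 3)) :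
    |ψ b - ψ a - fderiv ℝ ψ a (b - a)| ≤ G₂ * ‖b - a‖ ^ 2 := by
  have hG₂0 : 0 ≤ G₂ := le_trans (ContinuousLinearMap.opNorm_nonneg _) (hG₂ a)
  have hd1 : Differentiable ℝ ψ := hψ.differentiable (by norm_num)
  have hd2 : Differentiable ℝ (fun w => fderiv ℝ ψ w) :=
    (hψ.fderiv_right (m := 1) (by norm_num)).differentiable (by norm_num)
  have hlip : ∀ x : EuclideanSpace ℝ (Fin 3), ‖fderiv ℝ ψ x - fderiv ℝ ψ a‖ ≤ G₂ * ‖x - a‖ :=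
    fun x =>
    Convex.norm_image_sub_le_of_norm_fderiv_le (f := fun w => fderiv ℝ ψ w)
      (fun y _ => hd2 y) (fun y _ => hG₂ y) convex_univ (Set.mem_univ a) (Set.mem_univ x)
  have key : ‖ψ b - ψ a - fderiv ℝ ψ a (b - a)‖ ≤ G₂ * ‖b - a‖ * ‖b - a‖ := by
    refine Convex.norm_image_sub_le_of_norm_fderiv_le' (f := ψ) (s := segment ℝ a b)
      (φ := fderiv ℝ ψ a) (C := G₂ * ‖b - a‖)
      (fun y _ => hd1 y) ?_ (convex_segment a b) (left_mem_segment ℝ a b)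
      (right_mem_segment ℝ a b)
    intro x hx
    have hseg := dist_add_dist_of_mem_segment hx
    have h2 : dist a x ≤ dist a b := by
      have := dist_nonneg (x := x) (y := b)
      linarith
    have h1 : ‖x - a‖ ≤ ‖b - a‖ := by
      rw [dist_eq_norm] at h2
      calc ‖x - a‖ = ‖a - x‖ := (norm_sub_rev a x).symm
        _ ≤ ‖a - b‖ := h2
        _ = ‖b - a‖ := norm_sub_rev a b
    calc ‖fderiv ℝ ψ x - fderiv ℝ ψ a‖ ≤ G₂ * ‖x - a‖ := hlip x
      _ ≤ G₂ * ‖b - a‖ := by nlinarith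
  calc |ψ b - ψ a - fderiv ℝ ψ a (b - a)| = ‖ψ b - ψ a - fderiv ℝ ψ a (b - a)‖ :=
        (Real.norm_eq_abs _).symm
    _ ≤ G₂ * ‖b - a‖ * ‖b - a‖ := key
    _ = G₂ * ‖b - a‖ ^ 2 := by ring


/-- Second-order Taylor estimate for the circle-averaged collision difference:
there is a universal constant `C` such that the integral over the circle of
unit vectors perpendicular to `η` of `ψ(v₁') + ψ(v₂') - ψ(v₁) - ψ(v₂)` is bounded by
`C sin²(θ/2)(‖∇ψ‖_∞ |v₁-v₂| + ‖∇²ψ‖_∞ |v₁-v₂|²)`. -/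
theorem circle_average_collision_estimate :
    ∃ C > 0, ∀ (ψ : EuclideanSpace ℝ (Fin 3) → ℝ), ContDiff ℝ 2 ψ →
      ∀ (G₁ G₂ : ℝ),
        (∀ v, ‖gradient ψ v‖ ≤ G₁) →
        (∀ v, ‖fderiv ℝ (fun w => fderiv ℝ ψ w) v‖ ≤ G₂) →
        ∀ (v₁ v₂ η u₁ u₂ : EuclideanSpace ℝ (Fin 3)), v₁ ≠ v₂ →
          η = ‖v₁ - v₂‖⁻¹ • (v₁ - v₂) →
          ‖u₁‖ = 1 → ‖u₂‖ = 1 → ⟪η, u₁⟫ = 0 → ⟪η, u₂⟫ = 0 → ⟪u₁, u₂⟫ = 0 →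
          ∀ θ ∈ Set.Icc (0 : ℝ) π,
            |∫ t in (0 : ℝ)..(2 * π),
                (ψ ((1 / 2 : ℝ) • (v₁ + v₂) + (‖v₁ - v₂‖ / 2) •
                    (Real.sin θ • (Real.cos t • u₁ + Real.sin t • u₂) + Real.cos θ • η)) +
                 ψ ((1 / 2 : ℝ) • (v₁ + v₂) - (‖v₁ - v₂‖ / 2) •
                    (Real.sin θ • (Real.cos t • u₁ + Real.sin t • u₂) + Real.cos θ • η)) -
                 ψ v₁ - ψ v₂)| ≤
              C * Real.sin (θ / 2) ^ 2 * (G₁ * ‖v₁ - v₂‖ + G₂ * ‖v₁ - v₂‖ ^ 2) := by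
  refine ⟨4 * π, by positivity, ?_⟩
  intro ψ hψ G₁ G₂ hG₁ hG₂ v₁ v₂ η u₁ u₂ hne hη hu₁ hu₂ hηu₁ hηu₂ hu₁u₂ θ hθ
  have hπ : (0:ℝ) < π := Real.pi_pos
  have hvne : v₁ - v₂ ≠ 0 := sub_ne_zero.mpr hne
  set R : ℝ := ‖v₁ - v₂‖ with hRdef
  have hR0 : 0 < R := norm_pos_iff.mpr hvne
  set m : EuclideanSpace ℝ (Fin 3) := (1 / 2 : ℝ) • (v₁ + v₂) with hm
  set w : ℝ → EuclideanSpace ℝ (Fin 3) :=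
    fun t => Real.sin θ • (Real.cos t • u₁ + Real.sin t • u₂) + Real.cos θ • η with hwdef
  -- basic facts
  have hs2 : (0:ℝ) ≤ Real.sin (θ / 2) :=
    Real.sin_nonneg_of_nonneg_of_le_pi (by linarith [hθ.1]) (by linarith [hθ.2, hπ])
  have hηnorm : ‖η‖ = 1 := by
    rw [hη, norm_smul, norm_inv, norm_norm, ← hRdef, inv_mul_cancel₀ hR0.ne']
  have hv₁ : v₁ = m + (R / 2) • η := by
    rw [hη, hm, smul_smul, hRdef]
    rw [div_mul_eq_mul_div, mul_inv_cancel₀ (norm_ne_zero_iff.mpr hvne)]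
    module
  have hv₂ : v₂ = m - (R / 2) • η := by
    rw [hη, hm, smul_smul, hRdef]
    rw [div_mul_eq_mul_div, mul_inv_cancel₀ (norm_ne_zero_iff.mpr hvne)]
    module
  -- norm of w t - η
  have hwη : ∀ t, ‖w t - η‖ = 2 * Real.sin (θ / 2) := by
    intro t
    have hu₁η : ⟪u₁, η⟫ = (0:ℝ) := by rw [real_inner_comm]; exact hηu₁
    have hu₂η : ⟪u₂, η⟫ = (0:ℝ) := by rw [real_inner_comm]; exact hηu₂
    have hpt : ‖Real.cos t • u₁ + Real.sin t • u₂‖ ^ 2 = 1 := by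
      rw [norm_add_sq_real, norm_smul, norm_smul, real_inner_smul_left,
        real_inner_smul_right, hu₁u₂, hu₁, hu₂]
      simp only [Real.norm_eq_abs, mul_one, mul_pow, sq_abs]
      nlinarith [Real.sin_sq_add_cos_sq t]
    have hpη : ⟪Real.cos t • u₁ + Real.sin t • u₂, η⟫ = (0:ℝ) := by
      rw [inner_add_left, real_inner_smul_left, real_inner_smul_left, hu₁η, hu₂η]
      ring
    have hsq : ‖w t - η‖ ^ 2 = (2 * Real.sin (θ / 2)) ^ 2 := by
      have hrw : w t - η = Real.sin θ • (Real.cos t • u₁ + Real.sin t • u₂) +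
          (Real.cos θ - 1) • η := by
        rw [hwdef]; module
      rw [hrw, norm_add_sq_real]
      rw [real_inner_smul_left, real_inner_smul_right, hpη]
      rw [norm_smul, norm_smul, mul_pow, mul_pow, hηnorm, hpt]
      simp only [Real.norm_eq_abs, sq_abs]
      have hc : Real.cos θ = 1 - 2 * Real.sin (θ / 2) ^ 2 := by
        have h1 := Real.sin_sq_add_cos_sq (θ / 2)
        have h2 := Real.cos_sq (θ / 2)
        rw [show 2 * (θ / 2) = θ by ring] at h2
        linarith
      have h3 := Real.sin_sq_add_cos_sq θ
      rw [hc]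
      nlinarith [h3, sq_nonneg (Real.sin (θ/2))]
    nlinarith [norm_nonneg (w t - η), sq_nonneg (‖w t - η‖ - 2 * Real.sin (θ / 2))]
  have hc : Real.cos θ = 1 - 2 * Real.sin (θ / 2) ^ 2 := by
    have h1 := Real.sin_sq_add_cos_sq (θ / 2)
    have h2 := Real.cos_sq (θ / 2)
    rw [show 2 * (θ / 2) = θ by ring] at h2
    linarith
  have hG₁0 : 0 ≤ G₁ := le_trans (norm_nonneg _) (hG₁ v₁)
  have hG₂0 : 0 ≤ G₂ := le_trans (ContinuousLinearMap.opNorm_nonneg _) (hG₂ v₁)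
  -- the linear part and the full integrand
  set A : EuclideanSpace ℝ (Fin 3) →L[ℝ] ℝ := fderiv ℝ ψ v₁ - fderiv ℝ ψ v₂ with hA
  set L : ℝ → ℝ := fun t => A ((R / 2) • (w t - η)) with hL
  set F : ℝ → ℝ := fun t => ψ (m + (R / 2) • w t) + ψ (m - (R / 2) • w t) - ψ v₁ - ψ v₂ with hF
  -- norm of the displacement
  have hdisp : ∀ t, ‖(R / 2) • (w t - η)‖ = R * Real.sin (θ / 2) := by
    intro t
    rw [norm_smul, hwη t, Real.norm_eq_abs, abs_of_nonneg (by positivity : (0:ℝ) ≤ R / 2)]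
    ring
  -- pointwise Taylor bound on the error
  have hE : ∀ t, |F t - L t| ≤ 2 * G₂ * R ^ 2 * Real.sin (θ / 2) ^ 2 := by
    intro t
    have hd₁ : (m + (R / 2) • w t) - v₁ = (R / 2) • (w t - η) := by
      rw [hv₁]; module
    have hd₂ : (m - (R / 2) • w t) - v₂ = -((R / 2) • (w t - η)) := by
      rw [hv₂]; module
    have e₁ := taylor2 hψ hG₂ v₁ (m + (R / 2) • w t)
    rw [hd₁] at e₁
    have e₂ := taylor2 hψ hG₂ v₂ (m - (R / 2) • w t)
    rw [hd₂] at e₂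
    have hnn : ‖-((R / 2) • (w t - η))‖ = R * Real.sin (θ / 2) := by
      rw [norm_neg]; exact hdisp t
    rw [hdisp t] at e₁
    rw [hnn] at e₂
    have hsplit : F t - L t =
        (ψ (m + (R / 2) • w t) - ψ v₁ - fderiv ℝ ψ v₁ ((R / 2) • (w t - η))) +
        (ψ (m - (R / 2) • w t) - ψ v₂ - fderiv ℝ ψ v₂ (-((R / 2) • (w t - η)))) := by
      rw [hF, hL, hA]
      simp only [ContinuousLinearMap.sub_apply, map_neg]
      ring
    rw [hsplit]
    calc |_ + _| ≤ _ := abs_add_le _ _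
      _ ≤ G₂ * (R * Real.sin (θ / 2)) ^ 2 + G₂ * (R * Real.sin (θ / 2)) ^ 2 :=
        add_le_add e₁ e₂
      _ = 2 * G₂ * R ^ 2 * Real.sin (θ / 2) ^ 2 := by ring
  -- continuity
  have hψc : Continuous ψ := hψ.continuous
  have hcw : Continuous w := by rw [hwdef]; fun_prop
  have hcF : Continuous F := by
    rw [hF]
    apply Continuous.sub
    apply Continuous.sub
    apply Continuous.add
    · exact hψc.comp (by fun_prop)
    · exact hψc.comp (by fun_prop)
    · exact continuous_const
    · exact continuous_const
  have hcL : Continuous L := by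
    rw [hL]
    exact A.continuous.comp (show Continuous fun t => (R / 2) • (w t - η) from
      (hcw.sub continuous_const).const_smul (R / 2))
  have hIL : IntervalIntegrable L volume 0 (2 * π) := hcL.intervalIntegrable _ _
  have hIE : IntervalIntegrable (fun t => F t - L t) volume 0 (2 * π) :=
    (hcF.sub hcL).intervalIntegrable _ _
  -- explicit formula for L
  have hLt : ∀ t, L t = (R / 2 * Real.sin θ * A u₁) * Real.cos t +
      (R / 2 * Real.sin θ * A u₂) * Real.sin t + (R / 2 * (Real.cos θ - 1)) * A η := by
    intro t
    rw [hL, hwdef]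
    simp only [_root_.map_smul, map_sub, map_add, smul_eq_mul]
    ring
  -- value of the linear integral
  have hIntL : (∫ t in (0:ℝ)..(2 * π), L t) = (R / 2 * (Real.cos θ - 1)) * A η * (2 * π) := by
    rw [intervalIntegral.integral_congr (g := fun t => (R / 2 * Real.sin θ * A u₁) * Real.cos t +
      (R / 2 * Real.sin θ * A u₂) * Real.sin t + (R / 2 * (Real.cos θ - 1)) * A η)
      (fun t _ => hLt t)]
    rw [intervalIntegral.integral_add
        ((by fun_prop : Continuous _).intervalIntegrable _ _)
        ((by fun_prop : Continuous _).intervalIntegrable _ _),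
      intervalIntegral.integral_add
        ((by fun_prop : Continuous _).intervalIntegrable _ _)
        ((by fun_prop : Continuous _).intervalIntegrable _ _),
      intervalIntegral.integral_const_mul, intervalIntegral.integral_const_mul,
      integral_cos, integral_sin, intervalIntegral.integral_const]
    simp [Real.sin_two_pi, Real.cos_two_pi]
    ring
  -- bound on A η
  have hAη : |A η| ≤ 2 * G₁ := by
    calc |A η| = ‖A η‖ := (Real.norm_eq_abs _).symm
      _ ≤ ‖A‖ * ‖η‖ := A.le_opNorm η
      _ = ‖A‖ := by rw [hηnorm, mul_one]
      _ ≤ ‖fderiv ℝ ψ v₁‖ + ‖fderiv ℝ ψ v₂‖ := by rw [hA]; exact norm_sub_le _ _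
      _ ≤ G₁ + G₁ := by
          rw [grad_norm_eq v₁, grad_norm_eq v₂]
          exact add_le_add (hG₁ v₁) (hG₁ v₂)
      _ = 2 * G₁ := by ring
  -- bound on the linear integral
  have hBL : |∫ t in (0:ℝ)..(2 * π), L t| ≤ 4 * π * G₁ * R * Real.sin (θ / 2) ^ 2 := by
    rw [hIntL]
    rw [abs_mul, abs_mul, abs_mul]
    have h1 : |R / 2| = R / 2 := abs_of_nonneg (by positivity)
    have h2 : |Real.cos θ - 1| = 2 * Real.sin (θ / 2) ^ 2 := by
      rw [abs_of_nonpos (by nlinarith [Real.cos_le_one θ])]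
      rw [hc]; ring
    have h3 : |2 * π| = 2 * π := abs_of_nonneg (by positivity)
    rw [h1, h2, h3]
    calc R / 2 * (2 * Real.sin (θ / 2) ^ 2) * |A η| * (2 * π)
        ≤ R / 2 * (2 * Real.sin (θ / 2) ^ 2) * (2 * G₁) * (2 * π) := by
          apply mul_le_mul_of_nonneg_right _ (by positivity)
          apply mul_le_mul_of_nonneg_left hAη (by positivity)
      _ = 4 * π * G₁ * R * Real.sin (θ / 2) ^ 2 := by ring
  -- bound on the error integral
  have hBE : |∫ t in (0:ℝ)..(2 * π), (F t - L t)| ≤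
      4 * π * G₂ * R ^ 2 * Real.sin (θ / 2) ^ 2 := by
    have := intervalIntegral.norm_integral_le_of_norm_le_const
      (C := 2 * G₂ * R ^ 2 * Real.sin (θ / 2) ^ 2) (f := fun t => F t - L t)
      (a := (0:ℝ)) (b := 2 * π) (fun t _ => by
        rw [Real.norm_eq_abs]; exact hE t)
    rw [Real.norm_eq_abs] at this
    calc |∫ t in (0:ℝ)..(2 * π), (F t - L t)|
        ≤ 2 * G₂ * R ^ 2 * Real.sin (θ / 2) ^ 2 * |2 * π - 0| := this
      _ = 4 * π * G₂ * R ^ 2 * Real.sin (θ / 2) ^ 2 := by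
          rw [sub_zero, abs_of_nonneg (by positivity : (0:ℝ) ≤ 2 * π)]; ring
  -- put things together
  have hsum : (∫ t in (0:ℝ)..(2 * π), F t) =
      (∫ t in (0:ℝ)..(2 * π), L t) + ∫ t in (0:ℝ)..(2 * π), (F t - L t) := by
    rw [← intervalIntegral.integral_add hIL hIE]
    apply intervalIntegral.integral_congr
    intro t _
    ring
  have final : |∫ t in (0:ℝ)..(2 * π), F t| ≤
      4 * π * Real.sin (θ / 2) ^ 2 * (G₁ * R + G₂ * R ^ 2) := by
    rw [hsum]
    calc |_ + _| ≤ _ := abs_add_le _ _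
      _ ≤ 4 * π * G₁ * R * Real.sin (θ / 2) ^ 2 + 4 * π * G₂ * R ^ 2 * Real.sin (θ / 2) ^ 2 :=
        add_le_add hBL hBE
      _ = 4 * π * Real.sin (θ / 2) ^ 2 * (G₁ * R + G₂ * R ^ 2) := by ring
  exact final
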